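/- (Symmetry lemma from the proof of Proposition 9.) Suppose the density f is symmetric about its mean m, i.e. f(m + x) = f(m − x) for all x ∈ ℝ, and set the taste parameter t = m. Then the fixed points satisfy k₀(m) = 2m − k₁(m), the threshold satisfies Θ(m) = m, and hence the voter with cost γ = m is exactly indifferent between the rewards r₁* = k₁(m)/ρ(δ,φ) and r₀* = k₀(m)/ρ(δ,φ). -/

import Mathlib

open MeasureTheory

/-- A cost distribution: a CDF `F` with continuously differentiable structure
given by a strictly positive, differentiable, log-concave density `f` with full
support on `ℝ`. -/
structure CostDist where
  F : ℝ → ℝ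
  f : ℝ → ℝ
  deriv_eq : ∀ x : ℝ, HasDerivAt F (f x) x
  f_pos : ∀ x : ℝ, 0 < f x
  f_diff : Differentiable ℝ f
  f_logConcave : ConcaveOn ℝ Set.univ fun x => Real.log (f x)
  tendsto_bot : Filter.Tendsto F Filter.atBot (nhds 0)
  tendsto_top : Filter.Tendsto F Filter.atTop (nhds 1)

/-- Expected responsiveness of the classifier `δ = (δ₁, δ₀)` at precision `φ`. -/
noncomputable def rho (d1 d0 phi : ℝ) : ℝ := (d1 + d0 - 1) * (2 * phi - 1)

/-- The designer's expected payoff `EU_D(δ | r)`. -/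
noncomputable def EUD (D : CostDist) (phi A1 A0 B1 B0 r d1 d0 : ℝ) : ℝ :=
  D.F (r * rho d1 d0 phi) *
      (phi * (A1 * d1 + A0 * (1 - d1)) + (1 - phi) * (A0 * d0 + A1 * (1 - d0))) +
    (1 - D.F (r * rho d1 d0 phi)) *
      (phi * (B1 * d0 + B0 * (1 - d0)) + (1 - phi) * (B0 * d1 + B1 * (1 - d1)))

/-- A voter's expected payoff conditional on complying, `EU₁(r | γ)`. -/
noncomputable def EU1 (D : CostDist) (phi t gamma d1 d0 r : ℝ) : ℝ :=
  -gamma + r * rho d1 d0 phi * (1 - D.F (r * rho d1 d0 phi)) + t * D.F (r * rho d1 d0 phi)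

/-- A voter's expected payoff conditional on not complying, `EU₀(r)`. -/
noncomputable def EU0 (D : CostDist) (phi t d1 d0 r : ℝ) : ℝ :=
  -(r * rho d1 d0 phi) * D.F (r * rho d1 d0 phi) + t * D.F (r * rho d1 d0 phi)

/-- A voter's overall payoff `V(r | γ) = max(EU₁(r | γ), EU₀(r))`. -/
noncomputable def V (D : CostDist) (phi t gamma d1 d0 r : ℝ) : ℝ :=
  max (EU1 D phi t gamma d1 d0 r) (EU0 D phi t d1 d0 r)

/-- Strict quasiconcavity of a real function on a set. -/
def StrictQuasiconcaveOn (s : Set ℝ) (g : ℝ → ℝ) : Prop :=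
  ∀ ⦃x⦄, x ∈ s → ∀ ⦃y⦄, y ∈ s → x ≠ y → ∀ ⦃a b : ℝ⦄, 0 < a → 0 < b → a + b = 1 →
    min (g x) (g y) < g (a * x + b * y)

/-- Strict quasiconvexity of a real function on a set. -/
def StrictQuasiconvexOn (s : Set ℝ) (g : ℝ → ℝ) : Prop :=
  ∀ ⦃x⦄, x ∈ s → ∀ ⦃y⦄, y ∈ s → x ≠ y → ∀ ⦃a b : ℝ⦄, 0 < a → 0 < b → a + b = 1 →
    g (a * x + b * y) < max (g x) (g y)

/-- `(r, δ)` is an equilibrium: `r` maximizes the median voter's payoff given `δ`,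
and `δ ∈ [0,1]²` maximizes the designer's payoff given `r`. -/
def IsEquilibrium (D : CostDist) (phi t A1 A0 B1 B0 gammaMu r d1 d0 : ℝ) : Prop :=
  d1 ∈ Set.Icc (0 : ℝ) 1 ∧ d0 ∈ Set.Icc (0 : ℝ) 1 ∧
  (∀ r' : ℝ, V D phi t gammaMu d1 d0 r' ≤ V D phi t gammaMu d1 d0 r) ∧
  (∀ e1 ∈ Set.Icc (0 : ℝ) 1, ∀ e0 ∈ Set.Icc (0 : ℝ) 1,
    EUD D phi A1 A0 B1 B0 r e1 e0 ≤ EUD D phi A1 A0 B1 B0 r d1 d0)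

lemma CD.F_mono (D : CostDist) : Monotone D.F :=
  (strictMono_of_deriv_pos (fun x => by rw [(D.deriv_eq x).deriv]; exact D.f_pos x)).monotone

lemma CD.F_le_one (D : CostDist) (x : ℝ) : D.F x ≤ 1 :=
  (CD.F_mono D).ge_of_tendsto D.tendsto_top x

lemma CD.F_nonneg (D : CostDist) (x : ℝ) : 0 ≤ D.F x :=
  (CD.F_mono D).le_of_tendsto D.tendsto_bot x

lemma CD.ratio_anti (D : CostDist) : Antitone fun x => deriv D.f x / D.f x := by
  have hlog : ∀ x : ℝ, HasDerivAt (fun y => Real.log (D.f y)) (deriv D.f x / D.f x) x :=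
    fun x => ((D.f_diff x).hasDerivAt).log (D.f_pos x).ne'
  have h := D.f_logConcave.antitoneOn_deriv
    (fun x _ => (hlog x).differentiableAt)
  intro x y hxy
  have := h (Set.mem_univ x) (Set.mem_univ y) hxy
  rwa [(hlog x).deriv, (hlog y).deriv] at this

lemma CD.key (D : CostDist) (k : ℝ) : deriv D.f k * D.F k ≤ D.f k * D.f k := by
  have fcont : Continuous D.f := D.f_diff.continuous
  have hstep : ∀ a : ℝ, a ≤ k →
      deriv D.f k * (D.F k - D.F a) ≤ (D.f k - D.f a) * D.f k := by
    intro a ha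
    have hintf : IntervalIntegrable D.f volume a k := fcont.intervalIntegrable a k
    have hintr : IntervalIntegrable (fun x => deriv D.f x / D.f x) volume a k :=
      (CD.ratio_anti D).intervalIntegrable
    have hintd : IntervalIntegrable (deriv D.f) volume a k := by
      have := hintr.mul_continuousOn (g := D.f) fcont.continuousOn
      have heq : (fun x => deriv D.f x / D.f x * D.f x) = deriv D.f := by
        funext x; exact div_mul_cancel₀ _ (D.f_pos x).ne'
      rwa [heq] at this
    have iF : ∫ x in a..k, D.f x = D.F k - D.F a :=
      intervalIntegral.integral_eq_sub_of_hasDerivAt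
        (fun x _ => D.deriv_eq x) hintf
    have iff' : ∫ x in a..k, deriv D.f x = D.f k - D.f a :=
      intervalIntegral.integral_eq_sub_of_hasDerivAt
        (fun x _ => (D.f_diff x).hasDerivAt) hintd
    have hmono : ∀ x ∈ Set.Icc a k,
        deriv D.f k * D.f x ≤ deriv D.f x * D.f k := by
      intro x hx
      have hr := CD.ratio_anti D hx.2
      have hfx := D.f_pos x
      have hfk := D.f_pos k
      rw [div_le_div_iff₀ hfk hfx] at hr
      linarith
    have hI : ∫ x in a..k, deriv D.f k * D.f x ≤ ∫ x in a..k, deriv D.f x * D.f k := by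
      apply intervalIntegral.integral_mono_on ha (hintf.const_mul _) (hintd.mul_const _) hmono
    rw [intervalIntegral.integral_const_mul, intervalIntegral.integral_mul_const, iF, iff'] at hI
    exact hI
  have hev : ∀ᶠ a in Filter.atBot,
      deriv D.f k * D.F k ≤ D.f k * D.f k + deriv D.f k * D.F a := by
    filter_upwards [Filter.eventually_le_atBot k] with a ha
    have h1 := hstep a ha
    have h2 : 0 < D.f a * D.f k := mul_pos (D.f_pos a) (D.f_pos k)
    nlinarith
  have hlim : Filter.Tendsto (fun a => D.f k * D.f k + deriv D.f k * D.F a)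
      Filter.atBot (nhds (D.f k * D.f k + deriv D.f k * 0)) :=
    Filter.Tendsto.const_add _ (D.tendsto_bot.const_mul _)
  have := ge_of_tendsto hlim hev
  simpa using this

lemma CD.ratio2_mono (D : CostDist) : Monotone fun k => D.F k / D.f k := by
  have hd : ∀ k : ℝ, HasDerivAt (fun k => D.F k / D.f k)
      ((D.f k * D.f k - D.F k * deriv D.f k) / D.f k ^ 2) k :=
    fun k => (D.deriv_eq k).div (D.f_diff k).hasDerivAt (D.f_pos k).ne'
  apply monotone_of_deriv_nonneg (fun k => (hd k).differentiableAt)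
  intro k
  rw [(hd k).deriv]
  apply div_nonneg _ (sq_nonneg _)
  have := CD.key D k
  nlinarith

lemma CD.Fsym (D : CostDist) (m : ℝ) (hsym : ∀ x : ℝ, D.f (m + x) = D.f (m - x)) :
    ∀ x : ℝ, D.F (m - x) = 1 - D.F (m + x) := by
  set G : ℝ → ℝ := fun x => D.F (m + x) + D.F (m - x) with hG
  have hGd : ∀ x : ℝ, HasDerivAt G 0 x := by
    intro x
    have h1 : HasDerivAt (fun y => D.F (m + y)) (D.f (m + x) * 1) x :=
      (D.deriv_eq (m + x)).comp x ((hasDerivAt_id x).const_add m)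
    have h2 : HasDerivAt (fun y => D.F (m - y)) (D.f (m - x) * (-1)) x :=
      (D.deriv_eq (m - x)).comp x ((hasDerivAt_id x).const_sub m)
    have := h1.add h2
    have he : D.f (m + x) * 1 + D.f (m - x) * (-1) = 0 := by
      rw [hsym x]; ring
    rwa [he] at this
  have hconst : ∀ x : ℝ, G x = G 0 := by
    have := is_const_of_deriv_eq_zero (f := G)
      (fun x => (hGd x).differentiableAt) (fun x => (hGd x).deriv)
    intro x; exact this x 0
  have hlim : Filter.Tendsto G Filter.atTop (nhds 1) := by
    have h1 : Filter.Tendsto (fun x : ℝ => D.F (m + x)) Filter.atTop (nhds 1) :=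
      D.tendsto_top.comp (Filter.tendsto_atTop_add_const_left _ m Filter.tendsto_id)
    have h2 : Filter.Tendsto (fun x : ℝ => D.F (m - x)) Filter.atTop (nhds 0) := by
      apply D.tendsto_bot.comp
      have : Filter.Tendsto (fun x : ℝ => m + -x) Filter.atTop Filter.atBot :=
        Filter.tendsto_atBot_add_const_left _ m Filter.tendsto_neg_atTop_atBot
      exact this.congr fun x => by ring
    simpa using h1.add h2
  have hlim' : Filter.Tendsto G Filter.atTop (nhds (G 0)) := by
    have : G = fun _ => G 0 := funext hconst
    rw [this]; exact tendsto_const_nhds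
  have hG0 : G 0 = 1 := tendsto_nhds_unique hlim' hlim
  intro x
  have := hconst x
  rw [hG0] at this
  simp only [hG] at this ⊢
  linarith

/-- **Symmetry lemma (proof of Proposition 9).** If the density is symmetric about its
mean `m` and the taste parameter is `t = m`, then `k₀(m) = 2m − k₁(m)`, `Θ(m) = m`, and
the voter with cost `m` is exactly indifferent between `r₁*` and `r₀*`. -/
theorem prop9_symmetry (D : CostDist) (m k0v k1v : ℝ)
    (hsym : ∀ x : ℝ, D.f (m + x) = D.f (m - x))
    (hk1 : k1v = m + (1 - D.F k1v) / D.f k1v)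
    (hk0 : k0v = m - D.F k0v / D.f k0v) :
    k0v = 2 * m - k1v ∧
    k0v * D.F k0v + k1v * (1 - D.F k1v) + m * (D.F k1v - D.F k0v) = m ∧
    (∀ phi ∈ Set.Ioc (1 / 2 : ℝ) 1, ∀ d1 ∈ Set.Icc (0 : ℝ) 1, ∀ d0 ∈ Set.Icc (0 : ℝ) 1,
      rho d1 d0 phi ≠ 0 →
        V D phi m m d1 d0 (k1v / rho d1 d0 phi) =
          V D phi m m d1 d0 (k0v / rho d1 d0 phi)) := by
  set k' : ℝ := 2 * m - k1v with hk'
  have e1 : m + (k1v - m) = k1v := by ring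
  have e2 : m - (k1v - m) = k' := by rw [hk']; ring
  have hfk' : D.f k' = D.f k1v := by
    rw [← e1, ← e2, hsym]
  have hFk' : D.F k' = 1 - D.F k1v := by
    rw [← e2, CD.Fsym D m hsym, e1]
  have hdiv1 : (1 - D.F k1v) / D.f k1v = k1v - m := by linarith
  have hk'eq : k' + D.F k' / D.f k' = m := by
    rw [hFk', hfk', hdiv1, hk']; ring
  have hk0eq : k0v + D.F k0v / D.f k0v = m := by linarith
  have hmain : k0v = k' := by
    have hsm : StrictMono fun k => k + D.F k / D.f k := by
      intro x y hxy
      have := CD.ratio2_mono D hxy.le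
      simp only
      linarith
    exact hsm.injective (by rw [hk0eq, hk'eq])
  have hF0 : D.F k0v = 1 - D.F k1v := by rw [hmain, hFk']
  refine ⟨hmain, ?_, ?_⟩
  · rw [hF0, hmain, hk']; ring
  · intro phi _ d1 _ d0 _ hr
    have h1 : k1v / rho d1 d0 phi * rho d1 d0 phi = k1v := div_mul_cancel₀ _ hr
    have h0 : k0v / rho d1 d0 phi * rho d1 d0 phi = k0v := div_mul_cancel₀ _ hr
    simp only [V, EU1, EU0, h1, h0]
    have hm1 : m ≤ k1v := by
      have : 0 ≤ (1 - D.F k1v) / D.f k1v :=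
        div_nonneg (by linarith [CD.F_le_one D k1v]) (D.f_pos k1v).le
      linarith
    have hm0 : k0v ≤ m := by
      have : 0 ≤ D.F k0v / D.f k0v :=
        div_nonneg (CD.F_nonneg D k0v) (D.f_pos k0v).le
      linarith
    rw [max_eq_left (by nlinarith [CD.F_nonneg D k1v, CD.F_le_one D k1v]),
        max_eq_right (by nlinarith [CD.F_nonneg D k0v, CD.F_le_one D k0v])]
    rw [hF0, hmain, hk']
    ring
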